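/- Let f : ℝ → [0,∞) be even, integrable, and square-integrable. Then for every even integer ℓ ≥ 2 and every λ ∈ ℝ, f^{⋆ℓ}(λ) ≤ f^{⋆ℓ}(0); that is, the supremum of the ℓ-fold convolution f^{⋆ℓ} is attained at the origin. -/

import Mathlib

open MeasureTheory Filter

/-- Convolution of two real functions on ℝ. -/
noncomputable def conv (f g : ℝ → ℝ) (x : ℝ) : ℝ := ∫ y : ℝ, f (x - y) * g y

/-- ℓ-fold convolution of `f` with itself: `iterConv f 1 = f`,
`iterConv f (ℓ+1) = (iterConv f ℓ) ⋆ f`. Junk value `0` at `ℓ = 0`. -/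
noncomputable def iterConv (f : ℝ → ℝ) : ℕ → ℝ → ℝ
  | 0 => fun _ => 0
  | 1 => f
  | (n + 2) => conv (iterConv f (n + 1)) f

open MeasureTheory.Measure
open scoped ENNReal NNReal

namespace Stmt6

noncomputable def lconv (u v : ℝ → ℝ≥0∞) (x : ℝ) : ℝ≥0∞ := ∫⁻ y : ℝ, u (x - y) * v y

noncomputable def literConv (F : ℝ → ℝ≥0∞) : ℕ → ℝ → ℝ≥0∞
  | 0 => fun _ => 0
  | 1 => F
  | (n + 2) => lconv (literConv F (n + 1)) F


variable {u v w F : ℝ → ℝ≥0∞}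

lemma lconv_meas (hu : Measurable u) (hv : Measurable v) : Measurable (lconv u v) :=
  Measurable.lintegral_prod_right' ((hu.comp measurable_sub).mul (hv.comp measurable_snd))

lemma lintegral_reflect (hH : Measurable u) (x : ℝ) : ∫⁻ y, u (x - y) = ∫⁻ y, u y :=
  (measurePreserving_sub_left volume x).lintegral_comp hH

lemma lconv_mass (hu : Measurable u) (hv : Measurable v) :
    ∫⁻ x, lconv u v x = (∫⁻ x, u x) * ∫⁻ x, v x := by
  rw [show ∫⁻ x, lconv u v x = ∫⁻ x, ∫⁻ y, u (x - y) * v y from rfl,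
    lintegral_lintegral_swap ((hu.comp measurable_sub).mul (hv.comp measurable_snd)).aemeasurable]
  calc ∫⁻ y, ∫⁻ x, u (x - y) * v y
      = ∫⁻ y, (∫⁻ x, u (x - y)) * v y := by
        refine lintegral_congr fun y => ?_
        exact lintegral_mul_const'' _ (hu.comp (measurable_id.sub measurable_const)).aemeasurable
    _ = ∫⁻ y, (∫⁻ x, u x) * v y := by
        refine lintegral_congr fun y => ?_
        rw [lintegral_sub_right_eq_self u y]
    _ = (∫⁻ x, u x) * ∫⁻ y, v y := lintegral_const_mul'' _ hv.aemeasurable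

lemma lconv_assoc (hu : Measurable u) (hv : Measurable v) (hw : Measurable w) :
    lconv (lconv u v) w = lconv u (lconv v w) := by
  funext x
  have hL : lconv (lconv u v) w x = ∫⁻ y, ∫⁻ z, u (x - y - z) * v z * w y := by
    refine lintegral_congr fun y => ?_
    exact (lintegral_mul_const'' _
      ((hu.comp (measurable_const.sub measurable_id)).mul hv).aemeasurable).symm
  have hmeas : Measurable (Function.uncurry
      fun z y : ℝ => u (x - z) * (v (z - y) * w y)) := by fun_prop
  have hR : lconv u (lconv v w) x = ∫⁻ y, ∫⁻ z, u (x - z) * (v (z - y) * w y) := by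
    refine Eq.trans ?_ (lintegral_lintegral_swap hmeas.aemeasurable)
    refine lintegral_congr fun z => ?_
    exact (lintegral_const_mul'' _
      ((hv.comp (measurable_const.sub measurable_id)).mul hw).aemeasurable).symm
  rw [hL, hR]
  refine lintegral_congr fun y => ?_
  have key : ∫⁻ z, u (x - (z + y)) * (v ((z + y) - y) * w y)
      = ∫⁻ z, u (x - z) * (v (z - y) * w y) :=
    lintegral_add_right_eq_self (fun z => u (x - z) * (v (z - y) * w y)) y
  rw [← key]
  refine lintegral_congr fun z => ?_
  have h1 : x - (z + y) = x - y - z := by ring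
  have h2 : z + y - y = z := by ring
  rw [h1, h2, mul_assoc]

lemma literConv_meas (hF : Measurable F) : ∀ n, Measurable (literConv F n)
  | 0 => measurable_const
  | 1 => hF
  | (n + 2) => lconv_meas (literConv_meas hF (n + 1)) hF

lemma literConv_succ (F : ℝ → ℝ≥0∞) {n : ℕ} (hn : 1 ≤ n) :
    literConv F (n + 1) = lconv (literConv F n) F := by
  obtain ⟨m, rfl⟩ : ∃ m, n = m + 1 := ⟨n - 1, by omega⟩
  rfl

lemma literConv_mass (hF : Measurable F) : ∀ n, 1 ≤ n →
    ∫⁻ x, literConv F n x = (∫⁻ x, F x) ^ n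
  | 0, h => by omega
  | 1, _ => by simp [literConv]
  | (n + 2), _ => by
    rw [show literConv F (n + 2) = lconv (literConv F (n + 1)) F from rfl,
      lconv_mass (literConv_meas hF (n + 1)) hF, literConv_mass hF (n + 1) (by omega)]
    ring

lemma literConv_add (hF : Measurable F) {a : ℕ} (ha : 1 ≤ a) :
    ∀ b, 1 ≤ b → literConv F (a + b) = lconv (literConv F a) (literConv F b) := by
  intro b
  induction b with
  | zero => exact fun h => absurd h (by omega)
  | succ b ih =>
    intro _
    rcases Nat.lt_or_ge b 1 with hb | hb
    · interval_cases b
      exact literConv_succ F ha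
    · calc literConv F (a + (b + 1)) = lconv (literConv F (a + b)) F :=
            literConv_succ F (n := a + b) (by omega)
        _ = lconv (lconv (literConv F a) (literConv F b)) F := by rw [ih hb]
        _ = lconv (literConv F a) (lconv (literConv F b) F) :=
            lconv_assoc (literConv_meas hF a) (literConv_meas hF b) hF
        _ = lconv (literConv F a) (literConv F (b + 1)) := by rw [← literConv_succ F hb]

lemma enn_amgm (a b : ℝ≥0∞) : 2 * (a * b) ≤ a ^ 2 + b ^ 2 := by
  rcases eq_or_ne a ⊤ with rfl | ha
  · rcases eq_or_ne b 0 with rfl | hb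
    · simp
    · have hb2 : (⊤ : ℝ≥0∞) ^ 2 + b ^ 2 = ⊤ := by simp
      rw [hb2]; exact le_top
  · rcases eq_or_ne b ⊤ with rfl | hb
    · have hb2 : a ^ 2 + (⊤ : ℝ≥0∞) ^ 2 = ⊤ := by simp
      rw [hb2]; exact le_top
    · lift a to ℝ≥0 using ha
      lift b to ℝ≥0 using hb
      rw [← ENNReal.coe_mul, ← ENNReal.coe_ofNat, ← ENNReal.coe_mul, ← ENNReal.coe_pow,
        ← ENNReal.coe_pow, ← ENNReal.coe_add, ENNReal.coe_le_coe, ← NNReal.coe_le_coe]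
      push_cast
      nlinarith [sq_nonneg ((a : ℝ) - (b : ℝ))]

/-- pull back an a.e. statement along `y ↦ x - y`. -/
lemma ae_sub_left {p : ℝ → Prop} (h : ∀ᵐ z : ℝ, p z) (x : ℝ) : ∀ᵐ y : ℝ, p (x - y) :=
  ((measurePreserving_sub_left volume x).quasiMeasurePreserving.tendsto_ae).eventually h

lemma ae_neg {p : ℝ → Prop} (h : ∀ᵐ z : ℝ, p z) : ∀ᵐ y : ℝ, p (-y) :=
  ((Measure.measurePreserving_neg (volume : Measure ℝ)).quasiMeasurePreserving.tendsto_ae).eventually h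

lemma lconv_self_le (hu : Measurable u) (x : ℝ) : lconv u u x ≤ ∫⁻ y, u y ^ 2 := by
  have h2 : (2 : ℝ≥0∞) * lconv u u x ≤ 2 * ∫⁻ y, u y ^ 2 := by
    calc (2 : ℝ≥0∞) * lconv u u x = ∫⁻ y, 2 * (u (x - y) * u y) :=
          (lintegral_const_mul 2 ((hu.comp (measurable_const.sub measurable_id)).mul hu)).symm
      _ ≤ ∫⁻ y, (u (x - y) ^ 2 + u y ^ 2) := lintegral_mono fun y => enn_amgm _ _
      _ = (∫⁻ y, u (x - y) ^ 2) + ∫⁻ y, u y ^ 2 :=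
          lintegral_add_left ((hu.comp (measurable_const.sub measurable_id)).pow_const 2) _
      _ = (∫⁻ y, u y ^ 2) + ∫⁻ y, u y ^ 2 := by
          rw [lintegral_reflect (hu.pow_const 2) x]
      _ = 2 * ∫⁻ y, u y ^ 2 := (two_mul _).symm
  exact (ENNReal.mul_le_mul_iff_right (by norm_num) (by norm_num)).mp h2

lemma lconv_self_zero (heu : (fun z => u (-z)) =ᵐ[volume] u) :
    lconv u u 0 = ∫⁻ y, u y ^ 2 := by
  unfold lconv
  refine lintegral_congr_ae ?_
  filter_upwards [heu] with y hy
  have h0 : (0 : ℝ) - y = -y := by ring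
  rw [h0, hy, sq]

lemma lconv_even (heu : (fun z => u (-z)) =ᵐ[volume] u) (hev : (fun z => v (-z)) =ᵐ[volume] v)
    (hu : Measurable u) (hv : Measurable v) (x : ℝ) : lconv u v (-x) = lconv u v x := by
  have step1 : lconv u v (-x) = ∫⁻ y, u (x + y) * v y := by
    refine lintegral_congr_ae ?_
    have h1 : (fun y => u (-(x + y))) =ᵐ[volume] fun y => u (x + y) :=
      (measurePreserving_add_left volume x).quasiMeasurePreserving.ae_eq_comp heu
    filter_upwards [h1] with y hy
    rw [show -x - y = -(x + y) by ring, hy]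
  have step2 : ∫⁻ y, u (x + y) * v y = ∫⁻ y, u (x - y) * v (-y) := by
    have := (Measure.measurePreserving_neg (volume : Measure ℝ)).lintegral_comp
      (f := fun y => u (x + y) * v y) ((hu.comp (measurable_const.add measurable_id)).mul hv)
    rw [← this]
    refine lintegral_congr fun y => ?_
    show u (x + -y) * v (-y) = u (x - y) * v (-y)
    rw [show x + -y = x - y by ring]
  have step3 : ∫⁻ y, u (x - y) * v (-y) = lconv u v x := by
    refine lintegral_congr_ae ?_
    filter_upwards [hev] with y hy
    rw [hy]
  rw [step1, step2, step3]

lemma literConv_even (hF : Measurable F) (hFe : (fun z => F (-z)) =ᵐ[volume] F) :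
    ∀ n, 1 ≤ n → (fun z => literConv F n (-z)) =ᵐ[volume] literConv F n
  | 0, h => absurd h (by omega)
  | 1, _ => hFe
  | (n + 2), _ => by
    refine Eventually.of_forall fun x => ?_
    exact lconv_even (literConv_even hF hFe (n + 1) (by omega)) hFe
      (literConv_meas hF (n + 1)) hF x

section Bridge

variable {g : ℝ → ℝ}

lemma literConv_ae_fin (hF : Measurable F) (hFfin : ∫⁻ z, F z < ⊤) (n : ℕ) (hn : 1 ≤ n) :
    ∀ᵐ z : ℝ, literConv F n z ≠ ⊤ := by
  have h := literConv_mass hF n hn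
  have : ∫⁻ z, literConv F n z < ⊤ := by
    rw [h]; exact ENNReal.pow_lt_top hFfin
  exact (ae_lt_top (literConv_meas hF n) this.ne).mono fun z hz => hz.ne

lemma bridge (hg : Measurable g) (hg0 : ∀ x, 0 ≤ g x) (hgint : Integrable g) :
    ∀ n, 1 ≤ n → ∀ x,
      iterConv g n x = (literConv (fun z => ENNReal.ofReal (g z)) n x).toReal
  | 0, h => absurd h (by omega)
  | 1, _ => fun x => (ENNReal.toReal_ofReal (hg0 x)).symm
  | (n + 2), _ => by
    intro x
    set F : ℝ → ℝ≥0∞ := fun z => ENNReal.ofReal (g z) with hFdef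
    have hF : Measurable F := hg.ennreal_ofReal
    have IH := bridge hg hg0 hgint (n + 1) (by omega)
    have hu : Measurable (literConv F (n + 1)) := literConv_meas hF (n + 1)
    have hU : iterConv g (n + 1) = fun z => (literConv F (n + 1) z).toReal := funext IH
    show conv (iterConv g (n + 1)) g x = _
    rw [hU]
    show (∫ y : ℝ, (literConv F (n + 1) (x - y)).toReal * g y) = _
    have hmeas2 : AEStronglyMeasurable
        (fun y : ℝ => (literConv F (n + 1) (x - y)).toReal * g y) volume := by
      apply Measurable.aestronglyMeasurable
      exact ((hu.comp (measurable_const.sub measurable_id)).ennreal_toReal).mul hg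
    rw [integral_eq_lintegral_of_nonneg_ae
      (Eventually.of_forall fun y => mul_nonneg ENNReal.toReal_nonneg (hg0 y)) hmeas2]
    congr 1
    show _ = lconv (literConv F (n + 1)) F x
    refine lintegral_congr_ae ?_
    have hfin : ∀ᵐ y : ℝ, literConv F (n + 1) (x - y) ≠ ⊤ :=
      ae_sub_left (literConv_ae_fin hF hgint.lintegral_lt_top (n + 1) (by omega)) x
    filter_upwards [hfin] with y hy
    rw [ENNReal.ofReal_mul ENNReal.toReal_nonneg, ENNReal.ofReal_toReal hy]

end Bridge

lemma conv_congr_right {u f g : ℝ → ℝ} (h : f =ᵐ[volume] g) (x : ℝ) :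
    conv u f x = conv u g x :=
  integral_congr_ae (by filter_upwards [h] with y hy; rw [hy])

lemma conv_congr_left {f g v : ℝ → ℝ} (h : f =ᵐ[volume] g) (x : ℝ) :
    conv f v x = conv g v x :=
  integral_congr_ae (by filter_upwards [ae_sub_left h x] with y hy; rw [hy])

lemma iterConv_congr {f g : ℝ → ℝ} (h : f =ᵐ[volume] g) :
    ∀ n, 2 ≤ n → ∀ x, iterConv f n x = iterConv g n x
  | 0, hn => absurd hn (by omega)
  | 1, hn => absurd hn (by omega)
  | 2, _ => fun x => by
    show conv f f x = conv g g x
    rw [conv_congr_right h x, conv_congr_left h x]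
  | (n + 3), _ => fun x => by
    show conv (iterConv f (n + 2)) f x = conv (iterConv g (n + 2)) g x
    have hfg : iterConv f (n + 2) = iterConv g (n + 2) :=
      funext (iterConv_congr h (n + 2) (by omega))
    rw [hfg, conv_congr_right h x]

end Stmt6

open Stmt6

theorem stmt_6
    (f : ℝ → ℝ) (hf_nonneg : ∀ x, 0 ≤ f x) (hf_even : ∀ x, f (-x) = f x)
    (hf_int : Integrable f) (hf_sq : Integrable (fun x => (f x) ^ 2)) :
    ∀ ℓ : ℕ, 2 ≤ ℓ → Even ℓ → ∀ l : ℝ, iterConv f ℓ l ≤ iterConv f ℓ 0 := by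
  intro ℓ hℓ hev l
  obtain ⟨m, rfl⟩ := hev
  have hm : 1 ≤ m := by omega
  set g : ℝ → ℝ := fun x => max (hf_int.1.mk f x) 0 with hgdef
  have hgmeas : Measurable g := hf_int.1.stronglyMeasurable_mk.measurable.max measurable_const
  have hfg : f =ᵐ[volume] g := by
    filter_upwards [hf_int.1.ae_eq_mk] with x hx
    show f x = max (hf_int.1.mk f x) 0
    rw [← hx]
    exact (max_eq_left (hf_nonneg x)).symm
  have hg0 : ∀ x, 0 ≤ g x := fun x => le_max_right _ _
  have hgint : Integrable g := hf_int.congr hfg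
  have hgsq : Integrable (fun x => g x ^ 2) :=
    hf_sq.congr (by filter_upwards [hfg] with x hx; rw [hx])
  have hge : (fun z => g (-z)) =ᵐ[volume] g := by
    have h1 : ∀ᵐ z : ℝ, f (-z) = g (-z) := ae_neg hfg
    filter_upwards [h1, hfg] with z h1z hz
    show g (-z) = g z
    rw [← h1z, hf_even, hz]
  set F : ℝ → ℝ≥0∞ := fun z => ENNReal.ofReal (g z) with hFdef
  have hF : Measurable F := hgmeas.ennreal_ofReal
  have hFe : (fun z => F (-z)) =ᵐ[volume] F := by
    filter_upwards [hge] with z hz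
    show ENNReal.ofReal (g (-z)) = ENNReal.ofReal (g z)
    rw [hz]
  have hFfin : ∫⁻ z, F z < ⊤ := hgint.lintegral_lt_top
  have hF2fin : ∫⁻ z, F z ^ 2 < ⊤ := by
    have hpt : ∀ z, F z ^ 2 = ENNReal.ofReal (g z ^ 2) :=
      fun z => (ENNReal.ofReal_pow (hg0 z) 2).symm
    calc ∫⁻ z, F z ^ 2 = ∫⁻ z, ENNReal.ofReal (g z ^ 2) := lintegral_congr hpt
      _ < ⊤ := hgsq.lintegral_lt_top
  have heven := literConv_even hF hFe m hm
  have hsplit : literConv F (m + m) = lconv (literConv F m) (literConv F m) :=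
    literConv_add hF hm m hm
  have hub : literConv F (m + m) l ≤ literConv F (m + m) 0 := by
    rw [hsplit]
    calc lconv (literConv F m) (literConv F m) l
        ≤ ∫⁻ y, literConv F m y ^ 2 := lconv_self_le (literConv_meas hF m) l
      _ = lconv (literConv F m) (literConv F m) 0 := (lconv_self_zero heven).symm
  have hfin0 : literConv F (m + m) 0 ≠ ⊤ := by
    rcases eq_or_lt_of_le hm with h1 | h1
    · obtain rfl : m = 1 := h1.symm
      show lconv F F 0 ≠ ⊤
      exact ((lconv_self_le hF 0).trans_lt hF2fin).ne
    · have he2 : m + m = 2 + (m + m - 2) := by omega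
      have hsplit2 : literConv F (2 + (m + m - 2)) =
          lconv (literConv F 2) (literConv F (m + m - 2)) :=
        literConv_add hF (by omega) (m + m - 2) (by omega)
      rw [he2, hsplit2]
      have hb : lconv (literConv F 2) (literConv F (m + m - 2)) 0
          ≤ (∫⁻ z, F z ^ 2) * (∫⁻ z, F z) ^ (m + m - 2) := by
        show (∫⁻ y, literConv F 2 (0 - y) * literConv F (m + m - 2) y) ≤ _
        calc ∫⁻ y, literConv F 2 (0 - y) * literConv F (m + m - 2) y
            ≤ ∫⁻ y, (∫⁻ z, F z ^ 2) * literConv F (m + m - 2) y :=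
              lintegral_mono fun y => mul_le_mul_left (lconv_self_le hF (0 - y)) _
          _ = (∫⁻ z, F z ^ 2) * ∫⁻ y, literConv F (m + m - 2) y :=
              lintegral_const_mul'' _ (literConv_meas hF _).aemeasurable
          _ = (∫⁻ z, F z ^ 2) * (∫⁻ z, F z) ^ (m + m - 2) := by
              rw [literConv_mass hF _ (by omega)]
      exact (hb.trans_lt (ENNReal.mul_lt_top hF2fin (ENNReal.pow_lt_top hFfin))).ne
  calc iterConv f (m + m) l = iterConv g (m + m) l := iterConv_congr hfg (m + m) (by omega) l
    _ = (literConv F (m + m) l).toReal := bridge hgmeas hg0 hgint (m + m) (by omega) l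
    _ ≤ (literConv F (m + m) 0).toReal := ENNReal.toReal_mono hfin0 hub
    _ = iterConv g (m + m) 0 := (bridge hgmeas hg0 hgint (m + m) (by omega) 0).symm
    _ = iterConv f (m + m) 0 := (iterConv_congr hfg (m + m) (by omega) 0).symm
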